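/- Let R be a regular F-finite domain of characteristic p > 0 and A ⊆ R a Cartier extensible direct summand (with A strongly F-regular). Then for every ideal I of A and every real λ ≥ 0, the test ideal satisfies τ_A(I^λ) = τ_R((IR)^λ) ∩ A, where τ_T(I^λ) = ⋃_{e>0} Σ_{ψ ∈ C^e_T} ψ(I^{⌈p^e λ⌉}). -/

import Mathlib

/-- The test ideal `τ_T(I^λ) = ⋃_{e>0} Σ_{ψ ∈ C^e_T} ψ(I^{⌈p^e λ⌉})` of a (strongly
`F`-regular) ring `T` of characteristic `p`, where `C^e_T` is the set of
`p^{-e}`-linear (Cartier) maps on `T`. -/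
noncomputable def testIdeal (T : Type*) [CommRing T] (p : ℕ) (I : Ideal T)
    (lam : ℝ) : Ideal T :=
  ⨆ (e : ℕ) (_ : 0 < e),
    Ideal.span {y : T | ∃ ψ : T → T,
      (∀ a b : T, ψ (a + b) = ψ a + ψ b) ∧
      (∀ r x : T, ψ (r ^ p ^ e * x) = r * ψ x) ∧
      ∃ x ∈ I ^ (Nat.ceil ((p : ℝ) ^ e * lam)), y = ψ x}

/-- If a set is closed under left multiplication, then membership in the ideal span
reduces to membership in the additive closure. -/
lemma mem_addClosure_of_mem_span {R : Type*} [CommRing R] {S : Set R}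
    (hS : ∀ r : R, ∀ s ∈ S, r * s ∈ S) {x : R} (hx : x ∈ Ideal.span S) :
    x ∈ AddSubmonoid.closure S := by
  induction hx using Submodule.span_induction with
  | mem y hy => exact AddSubmonoid.subset_closure hy
  | zero => exact zero_mem _
  | add a b _ _ ha hb => exact add_mem ha hb
  | smul r y hy ih =>
    clear hy
    induction ih using AddSubmonoid.closure_induction with
    | mem z hz => exact AddSubmonoid.subset_closure (by simpa [smul_eq_mul] using hS r z hz)
    | zero => simpa using zero_mem (AddSubmonoid.closure S)
    | add a b _ _ ha hb => simpa [smul_eq_mul, mul_add] using add_mem ha hb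

/-- **Proposition (test ideals of Cartier extensible direct summands).**
Let `A ⊆ R` be an extension of Noetherian rings of positive characteristic `p`, with
`R` a regular `F`-finite domain (regularity encoded, via Kunz's theorem, by flatness
of the Frobenius) and `A` a strongly `F`-regular, Cartier extensible direct summand
of `R`.  Then for every ideal `I` of `A` and every real `λ ≥ 0`,
`τ_A(I^λ) = τ_R((IR)^λ) ∩ A`. -/
theorem testIdeal_cartierExtensible_summand
    {p : ℕ} (hp : p.Prime)
    {A R : Type*} [CommRing A] [CommRing R] [IsDomain A] [IsDomain R]
    [IsNoetherianRing A] [IsNoetherianRing R]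
    [CharP A p] [CharP R p] [ExpChar R p]
    [Algebra A R] (hinj : Function.Injective (algebraMap A R))
    -- `R` is regular (Kunz: the Frobenius of `R` is flat)
    (hreg : (frobenius R p).Flat)
    -- `R` is `F`-finite
    (hFF : ∀ e : ℕ, ∃ s : Finset R, ∀ t : R, ∃ c : R → R,
        t = ∑ x ∈ s, c x ^ p ^ e * x)
    -- `A` is strongly `F`-regular
    (hSFR : ∀ c : A, c ≠ 0 → ∃ (e : ℕ) (θ : A → A),
        (∀ a b : A, θ (a + b) = θ a + θ b) ∧
        (∀ r x : A, θ (r ^ p ^ e * x) = r * θ x) ∧ θ c = 1)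
    -- `A` is a direct summand of `R`
    (hsplit : ∃ β : R →ₗ[A] A, ∀ a : A, β (algebraMap A R a) = a)
    -- the inclusion `A ⊆ R` is Cartier extensible
    (hCE : ∀ (e : ℕ) (ψ : A → A),
        (∀ a b : A, ψ (a + b) = ψ a + ψ b) →
        (∀ r x : A, ψ (r ^ p ^ e * x) = r * ψ x) →
        ∃ ψ' : R → R, (∀ a b : R, ψ' (a + b) = ψ' a + ψ' b) ∧
          (∀ r x : R, ψ' (r ^ p ^ e * x) = r * ψ' x) ∧
          ∀ a : A, ψ' (algebraMap A R a) = algebraMap A R (ψ a)) :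
    ∀ (I : Ideal A) (lam : ℝ), 0 ≤ lam →
      testIdeal A p I lam
        = (testIdeal R p (I.map (algebraMap A R)) lam).comap (algebraMap A R) := by
  intro I lam _
  set f := algebraMap A R with hf
  apply le_antisymm
  · -- easy direction, via Cartier extensibility
    refine iSup₂_le fun e he => ?_
    rw [Ideal.span_le]
    rintro y ⟨ψ, hadd, hcart, x, hx, rfl⟩
    obtain ⟨ψ', h1, h2, h3⟩ := hCE e ψ hadd hcart
    have hmem : ψ' (f x) ∈ testIdeal R p (I.map f) lam := by
      refine le_iSup₂ (f := fun (e : ℕ) (_ : 0 < e) =>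
        Ideal.span {y : R | ∃ ψ : R → R,
          (∀ a b : R, ψ (a + b) = ψ a + ψ b) ∧
          (∀ r x : R, ψ (r ^ p ^ e * x) = r * ψ x) ∧
          ∃ x ∈ (I.map f) ^ (Nat.ceil ((p : ℝ) ^ e * lam)), y = ψ x}) e he ?_
      refine Ideal.subset_span ⟨ψ', h1, h2, f x, ?_, rfl⟩
      rw [← Ideal.map_pow]
      exact Ideal.mem_map_of_mem f hx
    simpa [Ideal.mem_comap, h3] using hmem
  · -- hard direction, via the splitting β
    intro a ha
    rw [Ideal.mem_comap] at ha
    obtain ⟨β, hβ⟩ := hsplit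
    have hgoal : β (f a) ∈ testIdeal A p I lam := by
      refine Submodule.iSup_induction
        (motive := fun y => β y ∈ testIdeal A p I lam) _ ha ?_ (by simp) ?_
      · intro e y hy
        by_cases he : 0 < e
        · rw [iSup_pos he] at hy
          set n := Nat.ceil ((p : ℝ) ^ e * lam) with hn
          set SA : Set A := {y : A | ∃ ψ : A → A,
            (∀ a b : A, ψ (a + b) = ψ a + ψ b) ∧
            (∀ r x : A, ψ (r ^ p ^ e * x) = r * ψ x) ∧
            ∃ x ∈ I ^ n, y = ψ x} with hSA
          -- key: pulling back a Cartier image of an element of `(I^n)R` along `β`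
          have key : ∀ x ∈ Ideal.span (f '' (I ^ n : Ideal A)),
              ∀ ψ' : R → R, (∀ a b : R, ψ' (a + b) = ψ' a + ψ' b) →
              (∀ r x : R, ψ' (r ^ p ^ e * x) = r * ψ' x) →
              β (ψ' x) ∈ Ideal.span SA := by
            intro x hx
            induction hx using Submodule.span_induction with
            | mem z hz =>
              obtain ⟨t, ht, rfl⟩ := hz
              intro ψ' h1 h2
              refine Ideal.subset_span ⟨fun b => β (ψ' (f b)), fun a b => by
                  beta_reduce; rw [map_add, h1, map_add], fun r x => by
                  beta_reduce; rw [map_mul, map_pow, h2, ← Algebra.smul_def, map_smul,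
                    smul_eq_mul],
                t, ht, rfl⟩
            | zero =>
              intro ψ' h1 _
              have h0 : ψ' 0 = 0 := by
                have h := h1 0 0
                rw [add_zero] at h
                exact left_eq_add.mp h
              simp [h0]
            | add x y hx hy ihx ihy =>
              intro ψ' h1 h2
              rw [h1, map_add]
              exact add_mem (ihx ψ' h1 h2) (ihy ψ' h1 h2)
            | smul r x hx ih =>
              intro ψ' h1 h2
              have := ih (fun z => ψ' (r * z))
                (fun a b => by beta_reduce; rw [mul_add, h1])
                (fun s z => by
                  beta_reduce
                  rw [show r * (s ^ p ^ e * z) = s ^ p ^ e * (r * z) by ring, h2])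
              simpa [smul_eq_mul] using this
          set SR : Set R := {y : R | ∃ ψ : R → R,
              (∀ a b : R, ψ (a + b) = ψ a + ψ b) ∧
              (∀ r x : R, ψ (r ^ p ^ e * x) = r * ψ x) ∧
              ∃ x ∈ (I.map f) ^ n, y = ψ x} with hSR
          have hsm : ∀ r : R, ∀ s ∈ SR, r * s ∈ SR := by
            rintro r s ⟨ψ, h1, h2, x, hx, rfl⟩
            exact ⟨fun z => r * ψ z, fun a b => by beta_reduce; rw [h1, mul_add],
              fun s' z => by beta_reduce; rw [h2]; ring, x, hx, rfl⟩
          have hy' := mem_addClosure_of_mem_span hsm hy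
          clear hy
          have : β y ∈ Ideal.span SA := by
            induction hy' using AddSubmonoid.closure_induction with
            | mem z hz =>
              obtain ⟨ψ', h1, h2, x, hx, rfl⟩ := hz
              have hx' : x ∈ Ideal.span (f '' (I ^ n : Ideal A)) := by
                rw [← Ideal.map_pow] at hx
                exact hx
              exact key x hx' ψ' h1 h2
            | zero => simp
            | add a b _ _ ha hb => rw [map_add]; exact add_mem ha hb
          exact le_iSup₂ (f := fun (e : ℕ) (_ : 0 < e) => Ideal.span
            {y : A | ∃ ψ : A → A,
              (∀ a b : A, ψ (a + b) = ψ a + ψ b) ∧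
              (∀ r x : A, ψ (r ^ p ^ e * x) = r * ψ x) ∧
              ∃ x ∈ I ^ (Nat.ceil ((p : ℝ) ^ e * lam)), y = ψ x}) e he this
        · rw [iSup_neg he, Submodule.mem_bot] at hy
          simp [hy]
      · intro x y hx hy
        rw [map_add]
        exact add_mem hx hy
    rwa [hβ a] at hgoal
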